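/- Let $X \subseteq \mathbb{R}^n$ be closed convex with $\bar{x} \in X$, let $\zeta_i : \mathbb{R}^n \to \mathbb{R}$ be convex for $i$ in a finite index set $\mathcal{A}$, and let $g_i \in \mathbb{R}^n$ for $i \in \mathcal{A}$. Define $P = \{ \sum_{i \in \mathcal{A}} \lambda_i (g_i + v_i) + w : \lambda_i \ge 0, \ v_i \in \partial \zeta_i(\bar{x}), \ w \in \mathcal{N}_X(\bar{x}) \}$ and $C = \{ d \in \mathcal{T}_X(\bar{x}) : g_i^T d + \zeta_i'(\bar{x}; d) \le 0 \text{ for all } i \in \mathcal{A} \}$. Then the polar cone of $P$ equals $C$, i.e., $P^{\circ} = C$. -/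

import Mathlib

open Set

variable {n : ℕ}

/-- Convex subdifferential of a finite convex function. -/
def subdiff (ζ : EuclideanSpace ℝ (Fin n) → ℝ) (x : EuclideanSpace ℝ (Fin n)) :
    Set (EuclideanSpace ℝ (Fin n)) :=
  {v | ∀ y, ζ x + (inner ℝ v (y - x) : ℝ) ≤ ζ y}

/-- Directional derivative of a convex function, as the support function of the
subdifferential: `ζ'(x; d) = max {⟨v, d⟩ : v ∈ ∂ζ(x)}`. -/
noncomputable def dirDerivSub (ζ : EuclideanSpace ℝ (Fin n) → ℝ)
    (x d : EuclideanSpace ℝ (Fin n)) : ℝ :=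
  sSup {r : ℝ | ∃ v ∈ subdiff ζ x, r = (inner ℝ v d : ℝ)}

/-- Normal cone of a convex set `X` at `x`. -/
def normalCone (X : Set (EuclideanSpace ℝ (Fin n))) (x : EuclideanSpace ℝ (Fin n)) :
    Set (EuclideanSpace ℝ (Fin n)) :=
  {v | ∀ y ∈ X, (inner ℝ v (y - x) : ℝ) ≤ 0}

/-- Tangent cone of a convex set `X` at `x`: closure of the cone of feasible directions. -/
def tangentConeConvex (X : Set (EuclideanSpace ℝ (Fin n))) (x : EuclideanSpace ℝ (Fin n)) :
    Set (EuclideanSpace ℝ (Fin n)) :=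
  closure {d | ∃ τ : ℝ, 0 ≤ τ ∧ ∃ y ∈ X, d = τ • (y - x)}

/-- Polar cone. -/
def polarCone (S : Set (EuclideanSpace ℝ (Fin n))) : Set (EuclideanSpace ℝ (Fin n)) :=
  {d | ∀ u ∈ S, (inner ℝ u d : ℝ) ≤ 0}

/-- The cone `P` of aggregated subgradients plus normal directions. -/
def Pcone {ι : Type} [Fintype ι] (g : ι → EuclideanSpace ℝ (Fin n))
    (ζ : ι → EuclideanSpace ℝ (Fin n) → ℝ) (X : Set (EuclideanSpace ℝ (Fin n)))
    (xbar : EuclideanSpace ℝ (Fin n)) : Set (EuclideanSpace ℝ (Fin n)) :=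
  {u | ∃ (lam : ι → ℝ) (v : ι → EuclideanSpace ℝ (Fin n)) (w : EuclideanSpace ℝ (Fin n)),
    (∀ i, 0 ≤ lam i) ∧ (∀ i, v i ∈ subdiff (ζ i) xbar) ∧ w ∈ normalCone X xbar ∧
    u = (∑ i, lam i • (g i + v i)) + w}

/-- The linearized cone `C`. -/
noncomputable def Ccone {ι : Type} [Fintype ι] (g : ι → EuclideanSpace ℝ (Fin n))
    (ζ : ι → EuclideanSpace ℝ (Fin n) → ℝ) (X : Set (EuclideanSpace ℝ (Fin n)))
    (xbar : EuclideanSpace ℝ (Fin n)) : Set (EuclideanSpace ℝ (Fin n)) :=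
  {d | d ∈ tangentConeConvex X xbar ∧
    ∀ i, (inner ℝ (g i) d : ℝ) + dirDerivSub (ζ i) xbar d ≤ 0}

lemma subdiff_nonempty (ζ : EuclideanSpace ℝ (Fin n) → ℝ)
    (h : ConvexOn ℝ Set.univ ζ) (x : EuclideanSpace ℝ (Fin n)) :
    (subdiff ζ x).Nonempty := by
  have cont : Continuous ζ := continuousOn_univ.1 (h.continuousOn isOpen_univ)
  set S : Set (EuclideanSpace ℝ (Fin n) × ℝ) := {p | ζ p.1 < p.2} with hS
  have hSconv : Convex ℝ S := by
    have := h.convex_strict_epigraph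
    simpa using this
  have hSopen : IsOpen S := isOpen_lt (cont.comp continuous_fst) continuous_snd
  have hx : (x, ζ x) ∉ S := by simp [hS]
  obtain ⟨φ, hφ⟩ := geometric_hahn_banach_point_open hSconv hSopen hx
  set β : ℝ := φ (0, 1) with hβdef
  set L : EuclideanSpace ℝ (Fin n) → ℝ := fun a => φ (a, 0) with hLdef
  have hsplit : ∀ (a : EuclideanSpace ℝ (Fin n)) (t : ℝ), φ (a, t) = L a + t * β := by
    intro a t
    have : (a, t) = (a, (0:ℝ)) + t • ((0 : EuclideanSpace ℝ (Fin n)), (1:ℝ)) := by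
      simp [Prod.ext_iff]
    rw [this, map_add, map_smul]
    simp [hLdef, hβdef, smul_eq_mul, mul_comm]
  have hβpos : 0 < β := by
    have := hφ (x, ζ x + 1) (by simp [hS])
    rw [hsplit, hsplit] at this
    linarith
  have key : ∀ y, L x + ζ x * β ≤ L y + ζ y * β := by
    intro y
    by_contra hc
    push_neg at hc
    set ε : ℝ := (L x + ζ x * β - (L y + ζ y * β)) / β with hε
    have hεpos : 0 < ε := div_pos (by linarith) hβpos
    have := hφ (y, ζ y + ε) (by simp [hS, hεpos])
    rw [hsplit, hsplit] at this
    have hεβ : ε * β = L x + ζ x * β - (L y + ζ y * β) := by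
      rw [hε]; field_simp
    nlinarith
  set f : StrongDual ℝ (EuclideanSpace ℝ (Fin n)) :=
    (-β⁻¹) • (φ.comp (ContinuousLinearMap.inl ℝ (EuclideanSpace ℝ (Fin n)) ℝ)) with hf
  refine ⟨(InnerProductSpace.toDual ℝ _).symm f, ?_⟩
  intro y
  have hvw : (inner ℝ ((InnerProductSpace.toDual ℝ _).symm f) (y - x) : ℝ)
      = -β⁻¹ * (L y - L x) := by
    rw [InnerProductSpace.toDual_symm_apply]
    simp only [hf, ContinuousLinearMap.smul_apply, ContinuousLinearMap.comp_apply,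
      ContinuousLinearMap.inl_apply, smul_eq_mul]
    have : ((y - x, (0:ℝ)) : EuclideanSpace ℝ (Fin n) × ℝ) = (y, 0) - (x, 0) := by
      simp [Prod.ext_iff]
    rw [this, map_sub]
  rw [hvw]
  have hkey := key y
  have h1 := mul_le_mul_of_nonneg_right hkey (inv_pos.mpr hβpos).le
  have h2 : β * β⁻¹ = 1 := mul_inv_cancel₀ (ne_of_gt hβpos)
  have h3 : L x * β⁻¹ + ζ x * (β * β⁻¹) ≤ L y * β⁻¹ + ζ y * (β * β⁻¹) := by
    ring_nf; ring_nf at h1; linarith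
  rw [h2, mul_one, mul_one] at h3
  linarith

lemma subdiff_bddAbove (ζ : EuclideanSpace ℝ (Fin n) → ℝ) (x d : EuclideanSpace ℝ (Fin n)) :
    BddAbove {r : ℝ | ∃ v ∈ subdiff ζ x, r = (inner ℝ v d : ℝ)} := by
  refine ⟨ζ (x + d) - ζ x, ?_⟩
  rintro r ⟨v, hv, rfl⟩
  have := hv (x + d)
  rw [add_sub_cancel_left] at this
  linarith

lemma tangent_eq (X : Set (EuclideanSpace ℝ (Fin n))) (hXconv : Convex ℝ X)
    (x : EuclideanSpace ℝ (Fin n)) (hx : x ∈ X) :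
    closure {d : EuclideanSpace ℝ (Fin n) | ∃ τ : ℝ, 0 ≤ τ ∧ ∃ y ∈ X, d = τ • (y - x)}
      = {d | ∀ u ∈ normalCone X x, (inner ℝ u d : ℝ) ≤ 0} := by
  set K0 : Set (EuclideanSpace ℝ (Fin n)) :=
    {d | ∃ τ : ℝ, 0 ≤ τ ∧ ∃ y ∈ X, d = τ • (y - x)} with hK0
  set K : ConvexCone ℝ (EuclideanSpace ℝ (Fin n)) :=
    { carrier := K0 ∪ {0}
      smul_mem' := by
        rintro c hc d (⟨τ, hτ, y, hy, rfl⟩ | hd)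
        · exact Or.inl ⟨c * τ, mul_nonneg hc.le hτ, y, hy, smul_smul c τ _⟩
        · simp only [Set.mem_singleton_iff] at hd; subst hd; right; simp
      add_mem' := by
        rintro d₁ (⟨τ₁, hτ₁, y₁, hy₁, rfl⟩ | h₁) d₂ hd₂
        · rcases hd₂ with ⟨τ₂, hτ₂, y₂, hy₂, rfl⟩ | h₂
          · rcases eq_or_lt_of_le (add_nonneg hτ₁ hτ₂) with hst | hst
            · have h1 : τ₁ = 0 := le_antisymm (by linarith) hτ₁
              have h2 : τ₂ = 0 := le_antisymm (by linarith) hτ₂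
              right; simp [h1, h2]
            · refine Or.inl ⟨τ₁ + τ₂, (by linarith), (τ₁/(τ₁+τ₂)) • y₁ + (τ₂/(τ₁+τ₂)) • y₂,
                hXconv hy₁ hy₂ (by positivity) (by positivity) (by field_simp), ?_⟩
              have hne : τ₁ + τ₂ ≠ 0 := ne_of_gt hst
              match_scalars <;> field_simp <;> ring
          · simp only [Set.mem_singleton_iff] at h₂; subst h₂
            exact Or.inl ⟨τ₁, hτ₁, y₁, hy₁, by simp⟩
        · simp only [Set.mem_singleton_iff] at h₁; subst h₁
          rw [zero_add]; exact hd₂ } with hK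
  have hKK0 : closure K0 = closure (K : Set _) := by
    apply subset_antisymm (closure_mono Set.subset_union_left)
    apply closure_minimal _ isClosed_closure
    rintro d (hd | hd)
    · exact subset_closure hd
    · simp only [Set.mem_singleton_iff] at hd; subst hd
      exact subset_closure ⟨0, le_refl _, x, hx, by simp⟩
  rw [hKK0]
  apply subset_antisymm
  · apply closure_minimal _ ?_
    · rintro d (⟨τ, hτ, y, hy, rfl⟩ | hd) u hu
      · rw [real_inner_smul_right]
        exact mul_nonpos_of_nonneg_of_nonpos hτ (hu y hy)
      · simp only [Set.mem_singleton_iff] at hd; subst hd; simp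
    · have : {d : EuclideanSpace ℝ (Fin n) | ∀ u ∈ normalCone X x, (inner ℝ u d : ℝ) ≤ 0}
          = ⋂ u ∈ normalCone X x, {d | (inner ℝ u d : ℝ) ≤ 0} := by
        ext d; simp
      rw [this]
      exact isClosed_biInter fun u _ => isClosed_le (continuous_const.inner continuous_id) continuous_const
  · intro d hd
    by_contra hdc
    have hne : ((K.closure : Set (EuclideanSpace ℝ (Fin n)))).Nonempty := by
      refine ⟨0, ?_⟩
      rw [ConvexCone.coe_closure]
      exact subset_closure (Or.inr rfl)
    have hcl : IsClosed ((K.closure : Set (EuclideanSpace ℝ (Fin n)))) := by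
      rw [ConvexCone.coe_closure]; exact isClosed_closure
    have hdmem : d ∉ K.closure := by
      rw [← SetLike.mem_coe, ConvexCone.coe_closure]; exact hdc
    have h0 : (0 : EuclideanSpace ℝ (Fin n)) ∈ (K.closure : Set (EuclideanSpace ℝ (Fin n))) := by
      rw [ConvexCone.coe_closure]
      exact subset_closure (Or.inr rfl)
    let C : ProperCone ℝ (EuclideanSpace ℝ (Fin n)) :=
      { carrier := (K.closure : Set (EuclideanSpace ℝ (Fin n)))
        add_mem' := fun ha hb => K.closure.add_mem ha hb
        zero_mem' := h0
        smul_mem' := fun c y hy => by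
          rcases c with ⟨c, hc⟩
          rcases hc.eq_or_lt with h | h
          · subst h
            show (0:ℝ) • y ∈ (K.closure : Set (EuclideanSpace ℝ (Fin n)))
            rw [zero_smul]; exact h0
          · exact K.closure.smul_mem h hy
        isClosed' := hcl }
    obtain ⟨w, hw1, hw2⟩ := ProperCone.hyperplane_separation' C hdmem
    rw [real_inner_comm] at hw2
    have hwN : -w ∈ normalCone X x := by
      intro z hz
      have hzK : (z - x) ∈ K.closure := by
        rw [← SetLike.mem_coe, ConvexCone.coe_closure]
        exact subset_closure (Or.inl ⟨1, zero_le_one, z, hz, (one_smul _ _).symm⟩)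
      have := hw1 _ hzK
      rw [inner_neg_left, real_inner_comm]
      linarith
    have := hd (-w) hwN
    rw [inner_neg_left] at this
    linarith

/-- The polar of `P` equals `C`. -/
theorem polar_Pcone_eq_Ccone {n : ℕ} {ι : Type} [Fintype ι]
    (X : Set (EuclideanSpace ℝ (Fin n))) (hXc : IsClosed X) (hXconv : Convex ℝ X)
    (xbar : EuclideanSpace ℝ (Fin n)) (hxbar : xbar ∈ X)
    (g : ι → EuclideanSpace ℝ (Fin n)) (ζ : ι → EuclideanSpace ℝ (Fin n) → ℝ)
    (hζ : ∀ i, ConvexOn ℝ Set.univ (ζ i)) :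
    polarCone (Pcone g ζ X xbar) = Ccone g ζ X xbar := by
  classical
  ext d
  constructor
  · intro hd
    have hv0 : ∀ i, ∃ v, v ∈ subdiff (ζ i) xbar := fun i => subdiff_nonempty _ (hζ i) xbar
    choose v0 hv0 using hv0
    constructor
    · show d ∈ tangentConeConvex X xbar
      rw [tangentConeConvex, tangent_eq X hXconv xbar hxbar]
      intro u hu
      exact hd u ⟨fun _ => 0, v0, u, fun _ => le_refl 0, hv0, hu, by simp⟩
    · intro i
      have hub : ∀ v ∈ subdiff (ζ i) xbar, (inner ℝ (g i + v) d : ℝ) ≤ 0 := by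
        intro v hv
        refine hd _ ⟨fun j => if j = i then 1 else 0, Function.update v0 i v, 0,
          fun j => by dsimp only; split <;> norm_num, ?_, fun y _ => by simp, ?_⟩
        · intro j
          rcases eq_or_ne j i with h | h
          · subst h; simpa using hv
          · rw [Function.update_of_ne h]; exact hv0 j
        · rw [add_zero]
          rw [Finset.sum_eq_single i]
          · simp
          · intro j _ hj; simp [hj]
          · intro h; exact absurd (Finset.mem_univ i) h
      have hne : {r : ℝ | ∃ v ∈ subdiff (ζ i) xbar, r = (inner ℝ v d : ℝ)}.Nonempty :=
        ⟨_, v0 i, hv0 i, rfl⟩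
      have hsup : dirDerivSub (ζ i) xbar d ≤ -(inner ℝ (g i) d : ℝ) := by
        refine csSup_le hne ?_
        rintro r ⟨v, hv, rfl⟩
        have := hub v hv
        rw [inner_add_left] at this
        linarith
      linarith
  · rintro ⟨hdT, hdi⟩ u ⟨lam, v, w, hlam, hv, hw, rfl⟩
    have hwd : (inner ℝ w d : ℝ) ≤ 0 := by
      rw [tangentConeConvex, tangent_eq X hXconv xbar hxbar] at hdT
      exact hdT w hw
    rw [inner_add_left, sum_inner]
    have hterm : ∀ i ∈ Finset.univ, (inner ℝ (lam i • (g i + v i)) d : ℝ) ≤ 0 := by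
      intro i _
      rw [real_inner_smul_left]
      refine mul_nonpos_of_nonneg_of_nonpos (hlam i) ?_
      have hvi : (inner ℝ (v i) d : ℝ) ≤ dirDerivSub (ζ i) xbar d :=
        le_csSup (subdiff_bddAbove (ζ i) xbar d) ⟨v i, hv i, rfl⟩
      have := hdi i
      rw [inner_add_left]
      linarith
    have := Finset.sum_nonpos hterm
    linarith
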